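/- For all t, φ, ℓ ∈ ℝ, the squared Frobenius norm of the matrix product a_t · k_φ · a_ℓ in SL₂(ℝ) equals 2·(cosh ℓ · cosh t + cos φ · sinh ℓ · sinh t). -/

import Mathlib

open Matrix MeasureTheory Real Filter Topology
open scoped MatrixGroups Pointwise

noncomputable section

/-- `SL(2,ℝ)` as the special linear group of 2×2 real matrices. -/
abbrev SL2R := Matrix.SpecialLinearGroup (Fin 2) ℝ

instance : TopologicalSpace SL2R :=
  show TopologicalSpace {A : Matrix (Fin 2) (Fin 2) ℝ // A.det = 1} from inferInstance

instance : MeasurableSpace SL2R := borel SL2R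

/-- Squared Frobenius norm `‖g‖² = a² + b² + c² + d²`. -/
def fnormSq (g : SL2R) : ℝ :=
  (g : Matrix (Fin 2) (Fin 2) ℝ) 0 0 ^ 2 + (g : Matrix (Fin 2) (Fin 2) ℝ) 0 1 ^ 2
    + (g : Matrix (Fin 2) (Fin 2) ℝ) 1 0 ^ 2 + (g : Matrix (Fin 2) (Fin 2) ℝ) 1 1 ^ 2

/-- Frobenius norm `‖g‖`. -/
def fnorm (g : SL2R) : ℝ := Real.sqrt (fnormSq g)

/-- The angle `θ_g = arg((g·i − i)/(g·i + i)) ∈ (−π, π]`; equals `0` when `g·i = i`. -/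
def theta (g : SL2R) : ℝ :=
  Complex.arg ((((g • UpperHalfPlane.I : UpperHalfPlane) : ℂ) - Complex.I)
    / (((g • UpperHalfPlane.I : UpperHalfPlane) : ℂ) + Complex.I))

/-- Distance between two angles: the distance from `a − b` to the nearest element of `2πℤ`. -/
def angDist (a b : ℝ) : ℝ := |((a - b : ℝ) : Real.Angle).toReal|

/-- Inverse hyperbolic cosine. -/
def arccosh (x : ℝ) : ℝ := Real.log (x + Real.sqrt (x ^ 2 - 1))

/-- `ℓ(M) = arccosh(‖M‖²/2)`, the hyperbolic distance from `i` to `M·i`. -/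
def ell (M : SL2R) : ℝ := arccosh (fnormSq M / 2)

/-- The pair-correlation density building block `f_ξ(ℓ)`. -/
def fxi (ξ l : ℝ) : ℝ :=
  if Real.sinh l ≤ ξ then 2 / ξ ^ 2 * l
  else if 2 * Real.sinh (l / 2) ≤ ξ then
    2 / ξ ^ 2 * (l + Real.log (1 + ξ ^ 2)
      - 2 * Real.log (Real.cosh l + Real.sqrt (Real.sinh l ^ 2 - ξ ^ 2)))
  else 2 / ξ ^ 2 * (l - Real.log (Real.cosh l + Real.sqrt (Real.sinh l ^ 2 - ξ ^ 2)))

/-- The rotation matrix `k_φ ∈ SL(2,ℝ)`. -/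
def kMat (φ : ℝ) : SL2R :=
  ⟨!![Real.cos (φ / 2), Real.sin (φ / 2); -Real.sin (φ / 2), Real.cos (φ / 2)], by
    rw [Matrix.det_fin_two_of]
    linear_combination Real.sin_sq_add_cos_sq (φ / 2)⟩

/-- The diagonal matrix `a_t ∈ SL(2,ℝ)`. -/
def aMat (t : ℝ) : SL2R :=
  ⟨!![Real.exp (t / 2), 0; 0, Real.exp (-t / 2)], by
    rw [Matrix.det_fin_two_of, ← Real.exp_add]
    norm_num
    ring⟩

/-- the squared Frobenius norm of `a_t k_φ a_ℓ`. -/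
theorem fnormSq_aMat_kMat_aMat (t φ l : ℝ) :
    fnormSq (aMat t * kMat φ * aMat l)
      = 2 * (Real.cosh l * Real.cosh t + Real.cos φ * Real.sinh l * Real.sinh t) := by
  have hφ : Real.cos φ = Real.cos (φ/2)^2 - Real.sin (φ/2)^2 := by
    rw [show φ = φ/2 + φ/2 by ring, Real.cos_add]; ring
  have hs : Real.sin (φ/2)^2 + Real.cos (φ/2)^2 = 1 := Real.sin_sq_add_cos_sq _
  have e1 : Real.exp t = Real.exp (t/2) * Real.exp (t/2) := by
    rw [← Real.exp_add]; congr 1; ring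
  have e2 : Real.exp (-t) = Real.exp (-t/2) * Real.exp (-t/2) := by
    rw [← Real.exp_add]; congr 1; ring
  have e3 : Real.exp l = Real.exp (l/2) * Real.exp (l/2) := by
    rw [← Real.exp_add]; congr 1; ring
  have e4 : Real.exp (-l) = Real.exp (-l/2) * Real.exp (-l/2) := by
    rw [← Real.exp_add]; congr 1; ring
  simp only [fnormSq, Matrix.SpecialLinearGroup.coe_mul]
  simp only [fnormSq, aMat, kMat, Matrix.SpecialLinearGroup.coe_mul, Matrix.mul_apply,
    Fin.sum_univ_two, Matrix.cons_val', Matrix.cons_val_zero, Matrix.cons_val_one,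
    Matrix.head_cons, Matrix.empty_val', Matrix.cons_val_fin_one, Matrix.head_fin_const,
    Matrix.of_apply]
  rw [hφ, Real.cosh_eq, Real.cosh_eq, Real.sinh_eq, Real.sinh_eq, e1, e2, e3, e4]
  linear_combination ((Real.exp (t/2)^2 + Real.exp (-t/2)^2)
    * (Real.exp (l/2)^2 + Real.exp (-l/2)^2) / 2) * hs
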